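/- (Inverse function theorem for formal power series in one noncommuting setting, specialized) Let k be a commutative ring and let H be a k-algebra endomorphism of the formal power series ring k[[x₁,…,xₙ]] (continuous, i.e., H(xᵢ) ∈ (x₁,…,xₙ)) such that the induced k-linear map on m/m², where m = (x₁,…,xₙ), is an isomorphism. Then H is a k-algebra automorphism. -/

import Mathlib

open MvPowerSeries
namespace IFTAux
variable {k : Type*} [CommRing k] {n : ℕ}

noncomputable def I (k : Type*) [CommRing k] (n : ℕ) : Ideal (MvPowerSeries (Fin n) k) :=
  Ideal.span (Set.range (MvPowerSeries.X : Fin n → MvPowerSeries (Fin n) k))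

lemma degree_add (a b : Fin n →₀ ℕ) : (a+b).degree = a.degree + b.degree := by
  simp [Finsupp.degree_eq_weight_one]

lemma degree_single (i : Fin n) (m : ℕ) : (Finsupp.single i m).degree = m := by
  classical
  rcases eq_or_ne m 0 with rfl | hm
  · simp [Finsupp.degree]
  · simp [Finsupp.degree_apply, Finsupp.support_single_ne_zero _ hm]

lemma coeff_zero_mem {y : MvPowerSeries (Fin n) k} (hy : y ∈ I k n) :
    MvPowerSeries.coeff 0 y = 0 := by
  have : I k n ≤ RingHom.ker (MvPowerSeries.constantCoeff (σ := Fin n) (R := k)) := by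
    rw [I, Ideal.span_le]
    rintro _ ⟨i, rfl⟩
    simp [RingHom.mem_ker]
  simpa [MvPowerSeries.coeff_zero_eq_constantCoeff] using this hy

/-- Lemma A, → direction -/
lemma coeff_eq_zero_of_mem_pow {d : ℕ} {f : MvPowerSeries (Fin n) k}
    (h : f ∈ (I k n) ^ d) {e : Fin n →₀ ℕ} (he : e.degree < d) :
    MvPowerSeries.coeff e f = 0 := by
  induction d generalizing f e with
  | zero => omega
  | succ d ih =>
    rw [pow_succ] at h
    refine Submodule.mul_induction_on h (fun x hx y hy => ?_) (fun x y hx hy => by simp [hx, hy])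
    · rw [MvPowerSeries.coeff_mul]
      apply Finset.sum_eq_zero
      rintro ⟨u, v⟩ huv
      rw [Finset.HasAntidiagonal.mem_antidiagonal] at huv
      rcases eq_or_ne v 0 with rfl | hv
      · simp [coeff_zero_mem hy]
      · have hdv : 1 ≤ v.degree := by
          rcases Nat.eq_zero_or_pos v.degree with h0 | h1
          · exact absurd ((Finsupp.degree_eq_zero_iff v).mp h0) hv
          · exact h1
        have : u.degree < d := by
          have := degree_add u v
          rw [huv] at this
          omega
        simp [ih hx this]


lemma X_mem_I (i : Fin n) : (MvPowerSeries.X i : MvPowerSeries (Fin n) k) ∈ I k n :=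
  Ideal.subset_span ⟨i, rfl⟩

/-- Lemma A, ← direction -/
lemma mem_pow_of_coeff (d : ℕ) (f : MvPowerSeries (Fin n) k)
    (h : ∀ e : Fin n →₀ ℕ, e.degree < d → MvPowerSeries.coeff e f = 0) :
    f ∈ (I k n) ^ d := by
  classical
  induction d generalizing f with
  | zero => simp
  | succ d ih =>
    set g : Fin n → MvPowerSeries (Fin n) k := fun i e =>
      if ∀ j, j < i → e j = 0 then MvPowerSeries.coeff (e + Finsupp.single i 1) f else 0
      with hg
    have hgcoeff : ∀ i e, MvPowerSeries.coeff e (g i) =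
        if ∀ j, j < i → e j = 0 then MvPowerSeries.coeff (e + Finsupp.single i 1) f else 0 :=
      fun i e => rfl
    have hsum : f = ∑ i : Fin n, MvPowerSeries.X i * g i := by
      ext e
      rw [map_sum]
      rcases eq_or_ne e 0 with rfl | he
      · rw [h 0 (by simp)]
        symm; apply Finset.sum_eq_zero
        intro i _
        rw [MvPowerSeries.X, MvPowerSeries.coeff_monomial_mul]
        rw [if_neg]
        simp [Finsupp.single_le_iff]
      · have hsupp : e.support.Nonempty := by
          rw [Finsupp.support_nonempty_iff]; exact he
        set i₀ := e.support.min' hsupp with hi₀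
        have hi₀mem : i₀ ∈ e.support := e.support.min'_mem hsupp
        have hei₀ : 1 ≤ e i₀ := Nat.one_le_iff_ne_zero.mpr (Finsupp.mem_support_iff.mp hi₀mem)
        rw [Finset.sum_eq_single i₀]
        · rw [MvPowerSeries.X, MvPowerSeries.coeff_monomial_mul,
            if_pos (Finsupp.single_le_iff.mpr hei₀), one_mul, hgcoeff, if_pos, tsub_add_cancel_of_le
            (Finsupp.single_le_iff.mpr hei₀)]
          intro j hj
          have hj' : j ∉ e.support := fun hmem => absurd (e.support.min'_le j hmem) (by omega)
          have : e j = 0 := Finsupp.notMem_support_iff.mp hj'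
          rw [Finsupp.tsub_apply, this]
          simp
        · intro i _ hi
          rw [MvPowerSeries.X, MvPowerSeries.coeff_monomial_mul]
          split_ifs with hle
          · rw [hgcoeff, if_neg, mul_zero]
            intro hcond
            have hei : 1 ≤ e i := Finsupp.single_le_iff.mp hle
            have himem : i ∈ e.support := Finsupp.mem_support_iff.mpr (by omega)
            have hi₀i : i₀ < i := lt_of_le_of_ne (e.support.min'_le i himem) (Ne.symm hi)
            have := hcond i₀ hi₀i
            rw [Finsupp.tsub_apply, Finsupp.single_apply, if_neg (by omega)] at this
            omega
          · rfl
        · intro hne; exact absurd (Finset.mem_univ i₀) hne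
    rw [hsum, pow_succ']
    apply Ideal.sum_mem
    intro i _
    refine Ideal.mul_mem_mul (X_mem_I i) (ih (g i) ?_)
    intro e he
    rw [hgcoeff]
    split_ifs with hc
    · exact h _ (by rw [degree_add, degree_single]; omega)
    · rfl



lemma pow_le_of_le {a b : ℕ} (h : a ≤ b) : (I k n)^b ≤ (I k n)^a :=
  Ideal.pow_le_pow_right h

lemma pow_congr {u v : MvPowerSeries (Fin n) k} (huv : u - v ∈ (I k n)^2)
    (hu : u ∈ I k n) (hv : v ∈ I k n) (m : ℕ) :
    u ^ m - v ^ m ∈ (I k n)^(m+1) := by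
  induction m with
  | zero => simp
  | succ m ih =>
    have : u ^ (m+1) - v ^ (m+1) = (u - v) * u ^ m + v * (u ^ m - v ^ m) := by ring
    rw [this]
    refine Ideal.add_mem _ ?_ ?_
    · have h1 : (u - v) * u ^ m ∈ (I k n)^2 * (I k n)^m :=
        Ideal.mul_mem_mul huv (Ideal.pow_mem_pow hu m)
      rw [← pow_add] at h1
      exact pow_le_of_le (by omega) h1
    · have h1 : v * (u ^ m - v ^ m) ∈ (I k n)^1 * (I k n)^(m+1) :=
        Ideal.mul_mem_mul (by simpa using hv) ih
      rw [← pow_add] at h1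
      exact pow_le_of_le (by omega) h1

lemma prod_pow_mem (u : Fin n → MvPowerSeries (Fin n) k) (hu : ∀ j, u j ∈ I k n)
    (e : Fin n →₀ ℕ) (s : Finset (Fin n)) :
    (∏ j ∈ s, u j ^ e j) ∈ (I k n) ^ (∑ j ∈ s, e j) := by
  classical
  induction s using Finset.induction with
  | empty => simp
  | @insert a s hj ih =>
    rw [Finset.prod_insert hj, Finset.sum_insert hj, pow_add]
    exact Ideal.mul_mem_mul (Ideal.pow_mem_pow (hu a) _) ih

lemma prod_pow_congr (u v : Fin n → MvPowerSeries (Fin n) k)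
    (huv : ∀ j, u j - v j ∈ (I k n)^2) (hu : ∀ j, u j ∈ I k n) (hv : ∀ j, v j ∈ I k n)
    (e : Fin n →₀ ℕ) (s : Finset (Fin n)) :
    (∏ j ∈ s, u j ^ e j) - (∏ j ∈ s, v j ^ e j) ∈ (I k n) ^ ((∑ j ∈ s, e j) + 1) := by
  classical
  induction s using Finset.induction with
  | empty => simp
  | @insert a s hj ih =>
    rw [Finset.prod_insert hj, Finset.prod_insert hj, Finset.sum_insert hj]
    have key : u a ^ e a * ∏ j ∈ s, u j ^ e j - v a ^ e a * ∏ j ∈ s, v j ^ e j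
        = (u a ^ e a - v a ^ e a) * ∏ j ∈ s, u j ^ e j
          + v a ^ e a * ((∏ j ∈ s, u j ^ e j) - ∏ j ∈ s, v j ^ e j) := by ring
    rw [key]
    refine Ideal.add_mem _ ?_ ?_
    · have h1 := Ideal.mul_mem_mul (pow_congr (huv a) (hu a) (hv a) (e a))
        (prod_pow_mem u hu e s)
      rw [← pow_add] at h1
      exact pow_le_of_le (by omega) h1
    · have h1 := Ideal.mul_mem_mul (Ideal.pow_mem_pow (hv a) (e a)) ih
      rw [← pow_add] at h1
      exact pow_le_of_le (by omega) h1



lemma degree_eq_sum_univ (e : Fin n →₀ ℕ) : e.degree = ∑ j : Fin n, e j := by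
  rw [Finsupp.degree_apply]
  exact Finset.sum_subset (Finset.subset_univ _)
    (fun x _ hx => Finsupp.notMem_support_iff.mp hx)

/-- coercion of a homogeneous polynomial of degree d lies in I^d -/
lemma homog_mem_pow {P : MvPolynomial (Fin n) k} {d : ℕ} (hP : P.IsHomogeneous d) :
    (P : MvPowerSeries (Fin n) k) ∈ (I k n) ^ d := by
  apply mem_pow_of_coeff
  intro e he
  rw [MvPolynomial.coeff_coe]
  exact hP.coeff_eq_zero (by omega)

/-- the finset of exponents of total degree d -/
noncomputable def Sd (n d : ℕ) : Finset (Fin n →₀ ℕ) :=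
  (Finsupp.finite_of_degree_le (σ := Fin n) d).toFinset.filter (fun e => e.degree = d)

lemma mem_Sd {d : ℕ} (e : Fin n →₀ ℕ) : e ∈ Sd n d ↔ e.degree = d := by
  simp only [Sd, Finset.mem_filter, Set.Finite.mem_toFinset, Set.mem_setOf_eq]
  exact ⟨fun h => h.2, fun h => ⟨le_of_eq h, h⟩⟩

/-- degree-d part of a power series, as a polynomial -/
noncomputable def Pd (d : ℕ) (f : MvPowerSeries (Fin n) k) : MvPolynomial (Fin n) k :=
  ∑ e ∈ Sd n d, MvPolynomial.monomial e (MvPowerSeries.coeff e f)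

lemma Pd_homog (d : ℕ) (f : MvPowerSeries (Fin n) k) : (Pd d f).IsHomogeneous d :=
  MvPolynomial.IsHomogeneous.sum _ _ _
    (fun e he => MvPolynomial.isHomogeneous_monomial _ ((mem_Sd e).mp he))

lemma coeff_Pd (d : ℕ) (f : MvPowerSeries (Fin n) k) (e : Fin n →₀ ℕ) :
    MvPolynomial.coeff e (Pd d f) =
      if e.degree = d then MvPowerSeries.coeff e f else 0 := by
  classical
  rw [Pd, MvPolynomial.coeff_sum]
  split_ifs with h
  · rw [Finset.sum_eq_single e]
    · simp
    · intro b _ hb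
      simp [MvPolynomial.coeff_monomial, hb]
    · intro hne
      exact absurd ((mem_Sd e).mpr h) hne
  · apply Finset.sum_eq_zero
    intro b hb
    rw [MvPolynomial.coeff_monomial, if_neg]
    rintro rfl
    exact h ((mem_Sd b).mp hb)

/-- L9: a series in I^d agrees with its degree-d part mod I^(d+1) -/
lemma sub_Pd_mem {d : ℕ} {f : MvPowerSeries (Fin n) k} (hf : f ∈ (I k n)^d) :
    f - (Pd d f : MvPowerSeries (Fin n) k) ∈ (I k n)^(d+1) := by
  apply mem_pow_of_coeff
  intro e he
  rw [map_sub, MvPolynomial.coeff_coe, coeff_Pd]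
  split_ifs with h
  · ring
  · rw [coeff_eq_zero_of_mem_pow hf (by omega), sub_zero]



lemma H_pow_mem (H : MvPowerSeries (Fin n) k →ₐ[k] MvPowerSeries (Fin n) k)
    (hHm : ∀ f ∈ I k n, H f ∈ I k n) (d : ℕ) :
    ∀ f ∈ (I k n)^d, H f ∈ (I k n)^d := by
  induction d with
  | zero => simp
  | succ d ih =>
    intro f hf
    rw [pow_succ] at hf ⊢
    refine Submodule.mul_induction_on hf (fun x hx y hy => ?_) (fun x y hx hy => ?_)
    · rw [map_mul]
      exact Ideal.mul_mem_mul (ih x hx) (hHm y hy)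
    · rw [map_add]; exact Ideal.add_mem _ hx hy

lemma eq_single_of_degree_one {e : Fin n →₀ ℕ} (h : e.degree = 1) :
    ∃ i, e = Finsupp.single i 1 := by
  classical
  have hne : e ≠ 0 := fun h0 => by simp [h0] at h
  obtain ⟨i, hi⟩ := Finsupp.support_nonempty_iff.mpr hne
  have hei : 1 ≤ e i := Nat.one_le_iff_ne_zero.mpr (Finsupp.mem_support_iff.mp hi)
  refine ⟨i, ?_⟩
  ext j
  rcases eq_or_ne j i with rfl | hj
  · have := Finsupp.le_degree j e
    simp only [Finsupp.single_eq_same]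
    omega
  · simp only [Finsupp.single_apply, if_neg (Ne.symm hj)]
    by_contra hne'
    have hjmem : j ∈ e.support := Finsupp.mem_support_iff.mpr hne'
    have hsub : ({i, j} : Finset (Fin n)) ⊆ e.support := by
      intro x hx
      simp only [Finset.mem_insert, Finset.mem_singleton] at hx
      rcases hx with rfl | rfl <;> assumption
    have hle := Finset.sum_le_sum_of_subset hsub (f := fun x => e x)
    rw [Finset.sum_insert (by simp [hj.symm]), Finset.sum_singleton] at hle
    have hb : ∑ x ∈ e.support, e x = 1 := h
    omega

lemma mem_sq_of_coeffs {z : MvPowerSeries (Fin n) k}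
    (h0 : MvPowerSeries.coeff 0 z = 0)
    (h1 : ∀ i, MvPowerSeries.coeff (Finsupp.single i 1) z = 0) :
    z ∈ (I k n)^2 := by
  apply mem_pow_of_coeff
  intro e he
  interval_cases h : e.degree
  · rw [(Finsupp.degree_eq_zero_iff e).mp h, h0]
  · obtain ⟨i, rfl⟩ := eq_single_of_degree_one h
    exact h1 i

/-- linear form with coefficients c -/
noncomputable def lin (c : Fin n → k) : MvPolynomial (Fin n) k :=
  ∑ i, MvPolynomial.monomial (Finsupp.single i 1) (c i)

lemma lin_homog (c : Fin n → k) : (lin c).IsHomogeneous 1 :=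
  MvPolynomial.IsHomogeneous.sum _ _ _
    (fun i _ => MvPolynomial.isHomogeneous_monomial _ (degree_single i 1))

lemma coeff_lin (c : Fin n → k) (i : Fin n) :
    MvPolynomial.coeff (Finsupp.single i 1) (lin c) = c i := by
  classical
  rw [lin, MvPolynomial.coeff_sum, Finset.sum_eq_single i]
  · simp
  · intro b _ hb
    rw [MvPolynomial.coeff_monomial, if_neg]
    intro hc
    exact hb (by
      have := (Finsupp.single_left_inj (one_ne_zero)).mp hc
      exact this)
  · simp

lemma coeff_zero_lin (c : Fin n → k) : MvPolynomial.coeff 0 (lin c) = 0 := by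
  classical
  rw [lin, MvPolynomial.coeff_sum]
  apply Finset.sum_eq_zero
  intro b _
  rw [MvPolynomial.coeff_monomial, if_neg]
  simp [Finsupp.single_eq_zero]

/-- substitution by the linear forms given by the columns of M -/
noncomputable def psi (M : Matrix (Fin n) (Fin n) k) :
    MvPolynomial (Fin n) k →ₐ[k] MvPolynomial (Fin n) k :=
  MvPolynomial.aeval (fun j => lin (fun i => M i j))

lemma psi_X (M : Matrix (Fin n) (Fin n) k) (j : Fin n) :
    psi M (MvPolynomial.X j) = lin (fun i => M i j) := by
  simp [psi]

lemma psi_C (M : Matrix (Fin n) (Fin n) k) (c : k) :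
    psi M (MvPolynomial.C c) = MvPolynomial.C c := by
  simp [psi, MvPolynomial.algebraMap_eq]

lemma psi_one : psi (1 : Matrix (Fin n) (Fin n) k) = AlgHom.id k _ := by
  apply MvPolynomial.algHom_ext
  intro j
  rw [psi_X, AlgHom.id_apply]
  rw [lin, Finset.sum_eq_single j]
  · simp [MvPolynomial.X]
  · intro b _ hb
    rw [Matrix.one_apply_ne hb, MvPolynomial.monomial_zero]
  · simp

lemma psi_comp (M M' : Matrix (Fin n) (Fin n) k) :
    (psi M).comp (psi M') = psi (M * M') := by
  apply MvPolynomial.algHom_ext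
  intro j
  rw [AlgHom.comp_apply, psi_X, psi_X]
  rw [lin, map_sum]
  rw [lin]
  have : ∀ i : Fin n, (psi M) (MvPolynomial.monomial (Finsupp.single i 1) (M' i j))
      = ∑ l, MvPolynomial.monomial (Finsupp.single l 1) (M l i * M' i j) := by
    intro i
    rw [← MvPolynomial.C_mul_X_eq_monomial, map_mul, psi_C, psi_X, lin,
      Finset.mul_sum]
    apply Finset.sum_congr rfl
    intro l _
    rw [MvPolynomial.C_mul_monomial, mul_comm (M' i j) (M l i)]
  rw [Finset.sum_congr rfl (fun i _ => this i), Finset.sum_comm]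
  apply Finset.sum_congr rfl
  intro l _
  rw [Matrix.mul_apply, map_sum]



section WithH

variable (H : MvPowerSeries (Fin n) k →ₐ[k] MvPowerSeries (Fin n) k)

lemma H_C (c : k) : H ((MvPowerSeries.C (σ := Fin n) (R := k)) c) = (MvPowerSeries.C (σ := Fin n) (R := k)) c := by
  rw [MvPowerSeries.c_eq_algebraMap]
  exact H.commutes c

/-- the matrix of the induced map on m/m^2 -/
noncomputable def Amat : Matrix (Fin n) (Fin n) k :=
  Matrix.of fun i j => MvPowerSeries.coeff (Finsupp.single i 1) (H (MvPowerSeries.X j))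

lemma coe_eq_ringHom (p : MvPolynomial (Fin n) k) :
    (p : MvPowerSeries (Fin n) k) = MvPolynomial.coeToMvPowerSeries.ringHom p := rfl

lemma coe_monomial_prod (e : Fin n →₀ ℕ) (c : k) :
    ((MvPolynomial.monomial e c : MvPolynomial (Fin n) k) : MvPowerSeries (Fin n) k)
      = (MvPowerSeries.C (σ := Fin n) (R := k)) c * ∏ j, (MvPowerSeries.X j : MvPowerSeries (Fin n) k) ^ e j := by
  rw [coe_eq_ringHom, MvPolynomial.monomial_eq, map_mul, Finsupp.prod, map_prod]
  rw [← coe_eq_ringHom, MvPolynomial.coe_C]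
  congr 1
  rw [Finset.prod_subset (Finset.subset_univ e.support)
    (fun x _ hx => by rw [Finsupp.notMem_support_iff.mp hx]; simp)]
  apply Finset.prod_congr rfl
  intro j _
  rw [map_pow, ← coe_eq_ringHom, MvPolynomial.coe_X]

lemma psi_monomial (M : Matrix (Fin n) (Fin n) k) (e : Fin n →₀ ℕ) (c : k) :
    psi M (MvPolynomial.monomial e c)
      = MvPolynomial.C c * ∏ j, (lin fun i => M i j) ^ e j := by
  rw [MvPolynomial.monomial_eq, map_mul, psi_C, Finsupp.prod, map_prod]
  congr 1
  rw [Finset.prod_subset (Finset.subset_univ e.support)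
    (fun x _ hx => by rw [Finsupp.notMem_support_iff.mp hx]; simp)]
  apply Finset.prod_congr rfl
  intro j _
  rw [map_pow, psi_X]

lemma lin_coe_mem (c : Fin n → k) : ((lin c : MvPolynomial (Fin n) k) :
    MvPowerSeries (Fin n) k) ∈ I k n := by
  have := homog_mem_pow (lin_homog c)
  rwa [pow_one] at this

/-- Key congruence: on a homogeneous polynomial of degree d, H agrees with the
linear substitution by the matrix A mod I^(d+1). -/
lemma key_congr {A : Matrix (Fin n) (Fin n) k}
    (hHm : ∀ f ∈ I k n, H f ∈ I k n)
    (hA : ∀ j, H (MvPowerSeries.X j) - ((lin fun i => A i j : MvPolynomial (Fin n) k) :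
      MvPowerSeries (Fin n) k) ∈ (I k n)^2)
    {P : MvPolynomial (Fin n) k} {d : ℕ} (hP : P.IsHomogeneous d) :
    H (P : MvPowerSeries (Fin n) k) - ((psi A P : MvPolynomial (Fin n) k) :
      MvPowerSeries (Fin n) k) ∈ (I k n)^(d+1) := by
  classical
  have e1 : (P : MvPowerSeries (Fin n) k) = ∑ e ∈ P.support,
      ((MvPolynomial.monomial e (MvPolynomial.coeff e P) : MvPolynomial (Fin n) k) :
        MvPowerSeries (Fin n) k) := by
    conv_lhs => rw [P.as_sum]
    rw [coe_eq_ringHom, map_sum]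
    exact Finset.sum_congr rfl fun _ _ => rfl
  have e2 : ((psi A P : MvPolynomial (Fin n) k) : MvPowerSeries (Fin n) k) = ∑ e ∈ P.support,
      ((psi A (MvPolynomial.monomial e (MvPolynomial.coeff e P)) : MvPolynomial (Fin n) k) :
        MvPowerSeries (Fin n) k) := by
    conv_lhs => rw [P.as_sum]
    rw [map_sum, coe_eq_ringHom, map_sum]
    exact Finset.sum_congr rfl fun _ _ => rfl
  rw [e1, map_sum, e2, ← Finset.sum_sub_distrib]
  apply Ideal.sum_mem
  intro e he
  have hdeg : e.degree = d := by
    rw [Finsupp.degree_eq_weight_one]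
    exact hP (MvPolynomial.mem_support_iff.mp he)
  rw [coe_monomial_prod, map_mul, map_prod, H_C,
    psi_monomial, coe_eq_ringHom, map_mul, map_prod, ← coe_eq_ringHom, MvPolynomial.coe_C]
  simp only [map_pow]
  rw [← mul_sub]
  apply Ideal.mul_mem_left
  have hmain := prod_pow_congr (fun j => H (MvPowerSeries.X j))
    (fun j => MvPolynomial.coeToMvPowerSeries.ringHom (lin fun i => A i j))
    (fun j => hA j) (fun j => hHm _ (X_mem_I j)) (fun j => lin_coe_mem _) e Finset.univ
  rw [← degree_eq_sum_univ, hdeg] at hmain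
  exact hmain

lemma psi_homog (M : Matrix (Fin n) (Fin n) k) {P : MvPolynomial (Fin n) k} {d : ℕ}
    (hP : P.IsHomogeneous d) : (psi M P).IsHomogeneous d := by
  have := hP.aeval (fun j => lin (fun i => M i j)) (fun j => lin_homog _)
  rwa [one_mul] at this

/-- gr-level injectivity -/
lemma gr_inj {A B : Matrix (Fin n) (Fin n) k}
    (hHm : ∀ f ∈ I k n, H f ∈ I k n)
    (hA : ∀ j, H (MvPowerSeries.X j) - ((lin fun i => A i j : MvPolynomial (Fin n) k) :
      MvPowerSeries (Fin n) k) ∈ (I k n)^2)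
    (hBA : B * A = 1) (d : ℕ) {f : MvPowerSeries (Fin n) k}
    (hf : f ∈ (I k n)^d) (hHf : H f ∈ (I k n)^(d+1)) : f ∈ (I k n)^(d+1) := by
  have hP : (Pd d f).IsHomogeneous d := Pd_homog d f
  have h1 : ((psi A (Pd d f) : MvPolynomial (Fin n) k) : MvPowerSeries (Fin n) k)
      ∈ (I k n)^(d+1) := by
    have hd1 : H f - H ((Pd d f : MvPolynomial (Fin n) k) : MvPowerSeries (Fin n) k)
        ∈ (I k n)^(d+1) := by
      rw [← map_sub]
      exact H_pow_mem H hHm (d+1) _ (sub_Pd_mem hf)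
    have hd2 := key_congr H hHm hA hP
    have : ((psi A (Pd d f) : MvPolynomial (Fin n) k) : MvPowerSeries (Fin n) k)
        = H f - (H f - H ((Pd d f : MvPolynomial (Fin n) k) : MvPowerSeries (Fin n) k))
          - (H ((Pd d f : MvPolynomial (Fin n) k) : MvPowerSeries (Fin n) k)
            - ((psi A (Pd d f) : MvPolynomial (Fin n) k) : MvPowerSeries (Fin n) k)) := by
      ring
    rw [this]
    exact Ideal.sub_mem _ (Ideal.sub_mem _ hHf hd1) hd2
  have hzero : psi A (Pd d f) = 0 := by
    have hcoeffs : ∀ e : Fin n →₀ ℕ, MvPolynomial.coeff e (psi A (Pd d f)) = 0 := by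
      intro e
      rcases eq_or_ne e.degree d with hd | hd
      · rw [← MvPolynomial.coeff_coe]
        exact coeff_eq_zero_of_mem_pow h1 (by omega)
      · exact (psi_homog A hP).coeff_eq_zero hd
    ext e
    rw [hcoeffs, MvPolynomial.coeff_zero]
  have hPd0 : Pd d f = 0 := by
    have : psi B (psi A (Pd d f)) = Pd d f := by
      rw [← AlgHom.comp_apply, psi_comp, hBA, psi_one, AlgHom.id_apply]
    rw [hzero, map_zero] at this
    exact this.symm
  have := sub_Pd_mem hf
  rwa [hPd0, MvPolynomial.coe_zero, sub_zero] at this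

/-- gr-level surjectivity -/
lemma gr_surj {A B : Matrix (Fin n) (Fin n) k}
    (hHm : ∀ f ∈ I k n, H f ∈ I k n)
    (hA : ∀ j, H (MvPowerSeries.X j) - ((lin fun i => A i j : MvPolynomial (Fin n) k) :
      MvPowerSeries (Fin n) k) ∈ (I k n)^2)
    (hAB : A * B = 1) (d : ℕ) {g : MvPowerSeries (Fin n) k}
    (hg : g ∈ (I k n)^d) :
    ∃ f ∈ (I k n)^d, g - H f ∈ (I k n)^(d+1) := by
  set P : MvPolynomial (Fin n) k := psi B (Pd d g) with hPdef
  have hP : P.IsHomogeneous d := psi_homog B (Pd_homog d g)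
  refine ⟨(P : MvPowerSeries (Fin n) k), homog_mem_pow hP, ?_⟩
  have hAP : psi A P = Pd d g := by
    rw [hPdef, ← AlgHom.comp_apply, psi_comp, hAB, psi_one, AlgHom.id_apply]
  have h2 := key_congr H hHm hA hP
  rw [hAP] at h2
  have : g - H (P : MvPowerSeries (Fin n) k)
      = (g - ((Pd d g : MvPolynomial (Fin n) k) : MvPowerSeries (Fin n) k))
        + (((Pd d g : MvPolynomial (Fin n) k) : MvPowerSeries (Fin n) k)
          - H (P : MvPowerSeries (Fin n) k)) := by ring
  rw [this]
  refine Ideal.add_mem _ (sub_Pd_mem hg) ?_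
  have := Submodule.neg_mem _ h2
  rwa [neg_sub] at this




lemma coe_monomial_single (j : Fin n) (c : k) :
    ((MvPolynomial.monomial (Finsupp.single j 1) c : MvPolynomial (Fin n) k) :
      MvPowerSeries (Fin n) k) = (MvPowerSeries.C (σ := Fin n) (R := k)) c * MvPowerSeries.X j := by
  rw [coe_monomial_prod]
  congr 1
  rw [Finset.prod_eq_single j]
  · simp
  · intro b _ hb
    rw [Finsupp.single_apply, if_neg (Ne.symm hb), pow_zero]
  · simp

lemma coeff_H_lin (c : Fin n → k) (i : Fin n) :
    MvPowerSeries.coeff (Finsupp.single i 1)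
      (H ((lin c : MvPolynomial (Fin n) k) : MvPowerSeries (Fin n) k))
      = ∑ j, Amat H i j * c j := by
  rw [lin, coe_eq_ringHom, map_sum, map_sum, map_sum]
  apply Finset.sum_congr rfl
  intro j _
  rw [← coe_eq_ringHom, coe_monomial_single, map_mul, H_C, MvPowerSeries.coeff_C_mul,
    mul_comm]
  rfl

lemma HX_sub_lin (hHm : ∀ f ∈ I k n, H f ∈ I k n) (j : Fin n) :
    H (MvPowerSeries.X j) - ((lin fun i => Amat H i j : MvPolynomial (Fin n) k) :
      MvPowerSeries (Fin n) k) ∈ (I k n)^2 := by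
  apply mem_sq_of_coeffs
  · rw [map_sub, coeff_zero_mem (hHm _ (X_mem_I j)), MvPolynomial.coeff_coe,
      coeff_zero_lin, sub_zero]
  · intro i
    rw [map_sub, MvPolynomial.coeff_coe, coeff_lin]
    simp [Amat, sub_self]

lemma exists_AB (hHm : ∀ f ∈ I k n, H f ∈ I k n)
    (hinj : ∀ f ∈ I k n, H f ∈ (I k n)^2 → f ∈ (I k n)^2)
    (hsurj : ∀ g ∈ I k n, ∃ f ∈ I k n, g - H f ∈ (I k n)^2) :
    ∃ B, B * Amat H = 1 ∧ Amat H * B = 1 := by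
  classical
  set A := Amat H with hA
  have hkey : ∀ c : Fin n → k, Matrix.toLin' A c = 0 → c = 0 := by
    intro c hc
    have hfI : ((lin c : MvPolynomial (Fin n) k) : MvPowerSeries (Fin n) k) ∈ I k n :=
      lin_coe_mem c
    have hHf : H ((lin c : MvPolynomial (Fin n) k) : MvPowerSeries (Fin n) k) ∈ (I k n)^2 := by
      apply mem_sq_of_coeffs
      · exact coeff_zero_mem (hHm _ hfI)
      · intro i
        rw [coeff_H_lin]
        have := congrFun hc i
        simpa [Matrix.toLin'_apply, Matrix.mulVec, dotProduct] using this
    have hf2 := hinj _ hfI hHf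
    funext i
    have := coeff_eq_zero_of_mem_pow hf2 (e := Finsupp.single i 1)
      (by rw [degree_single]; omega)
    rwa [MvPolynomial.coeff_coe, coeff_lin] at this
  have hinjT : Function.Injective (Matrix.toLin' A) := by
    intro c₁ c₂ hc
    have h0 : Matrix.toLin' A (c₁ - c₂) = 0 := by rw [map_sub, hc, sub_self]
    exact sub_eq_zero.mp (hkey _ h0)
  have hsurjT : Function.Surjective (Matrix.toLin' A) := by
    intro c
    obtain ⟨f, hfI, hf2⟩ := hsurj ((lin c : MvPolynomial (Fin n) k) :
      MvPowerSeries (Fin n) k) (lin_coe_mem c)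
    refine ⟨fun j => MvPowerSeries.coeff (Finsupp.single j 1) f, ?_⟩
    set b : Fin n → k := fun j => MvPowerSeries.coeff (Finsupp.single j 1) f with hb
    have hflin : f - ((lin b : MvPolynomial (Fin n) k) : MvPowerSeries (Fin n) k)
        ∈ (I k n)^2 := by
      apply mem_sq_of_coeffs
      · rw [map_sub, coeff_zero_mem hfI, MvPolynomial.coeff_coe, coeff_zero_lin, sub_zero]
      · intro i
        rw [map_sub, MvPolynomial.coeff_coe, coeff_lin, sub_self]
    funext i
    have h1 : MvPowerSeries.coeff (Finsupp.single i 1) (H f)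
        = MvPowerSeries.coeff (Finsupp.single i 1)
          (H ((lin b : MvPolynomial (Fin n) k) : MvPowerSeries (Fin n) k)) := by
      have hmem := H_pow_mem H hHm 2 _ hflin
      rw [map_sub] at hmem
      have := coeff_eq_zero_of_mem_pow hmem (e := Finsupp.single i 1)
        (by rw [degree_single]; omega)
      rw [map_sub] at this
      exact sub_eq_zero.mp this
    have h2 : MvPowerSeries.coeff (Finsupp.single i 1)
        ((lin c : MvPolynomial (Fin n) k) : MvPowerSeries (Fin n) k)
        = MvPowerSeries.coeff (Finsupp.single i 1) (H f) := by
      have := coeff_eq_zero_of_mem_pow hf2 (e := Finsupp.single i 1)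
        (by rw [degree_single]; omega)
      rw [map_sub] at this
      exact sub_eq_zero.mp this
    rw [MvPolynomial.coeff_coe, coeff_lin] at h2
    rw [coeff_H_lin] at h1
    simp only [Matrix.toLin'_apply, Matrix.mulVec, dotProduct]
    rw [h2, h1]
  have hdet : IsUnit (LinearMap.det (Matrix.toLin' A)) :=
    LinearEquiv.isUnit_det' (LinearEquiv.ofBijective (Matrix.toLin' A) ⟨hinjT, hsurjT⟩)
  rw [LinearMap.det_toLin'] at hdet
  have := Matrix.invertibleOfIsUnitDet A hdet
  exact ⟨⅟A, invOf_mul_self A, mul_invOf_self A⟩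




lemma H_injective (hHm : ∀ f ∈ I k n, H f ∈ I k n)
    (hinj : ∀ f ∈ I k n, H f ∈ (I k n)^2 → f ∈ (I k n)^2)
    (hsurj : ∀ g ∈ I k n, ∃ f ∈ I k n, g - H f ∈ (I k n)^2) :
    Function.Injective H := by
  classical
  obtain ⟨B, hBA, hAB⟩ := exists_AB H hHm hinj hsurj
  have hA := HX_sub_lin H hHm
  intro f₁ f₂ hf
  by_contra hne
  set h := f₁ - f₂ with hh
  have hne0 : h ≠ 0 := sub_ne_zero.mpr hne
  have hH0 : H h = 0 := by rw [hh, map_sub, hf, sub_self]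
  have hex : ∃ d : ℕ, ∃ e : Fin n →₀ ℕ, e.degree = d ∧ MvPowerSeries.coeff e h ≠ 0 := by
    by_contra hc
    push_neg at hc
    apply hne0
    ext e
    have := hc e.degree e rfl
    simpa using this
  set d₀ := Nat.find hex with hd₀
  obtain ⟨e₀, he₀d, he₀⟩ := Nat.find_spec hex
  have hmem : h ∈ (I k n)^d₀ := by
    apply mem_pow_of_coeff
    intro e he
    by_contra hne'
    exact absurd ⟨e, rfl, hne'⟩ (Nat.find_min hex he)
  have hmem' : h ∈ (I k n)^(d₀+1) := by
    apply gr_inj H hHm hA hBA d₀ hmem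
    rw [hH0]
    exact Ideal.zero_mem _
  exact he₀ (coeff_eq_zero_of_mem_pow hmem' (by omega))

lemma H_surjective (hHm : ∀ f ∈ I k n, H f ∈ I k n)
    (hinj : ∀ f ∈ I k n, H f ∈ (I k n)^2 → f ∈ (I k n)^2)
    (hsurj : ∀ g ∈ I k n, ∃ f ∈ I k n, g - H f ∈ (I k n)^2) :
    Function.Surjective H := by
  classical
  obtain ⟨B, hBA, hAB⟩ := exists_AB H hHm hinj hsurj
  have hA := HX_sub_lin H hHm
  intro g
  let step : ℕ → MvPowerSeries (Fin n) k → MvPowerSeries (Fin n) k := fun d r =>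
    if hr : r ∈ (I k n)^d then (gr_surj H hHm hA hAB d hr).choose else 0
  have step_mem : ∀ d r, step d r ∈ (I k n)^d := by
    intro d r
    dsimp only [step]
    split_ifs with hr
    · exact (gr_surj H hHm hA hAB d hr).choose_spec.1
    · exact Ideal.zero_mem _
  have step_spec : ∀ d r, r ∈ (I k n)^d → r - H (step d r) ∈ (I k n)^(d+1) := by
    intro d r hr
    dsimp only [step]
    rw [dif_pos hr]
    exact (gr_surj H hHm hA hAB d hr).choose_spec.2
  let seq : ℕ → MvPowerSeries (Fin n) k := fun d =>
    Nat.rec 0 (fun d fd => fd + step d (g - H fd)) d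
  have seq_succ : ∀ d, seq (d+1) = seq d + step d (g - H (seq d)) := fun d => rfl
  have hrem : ∀ d, g - H (seq d) ∈ (I k n)^d := by
    intro d
    induction d with
    | zero => rw [pow_zero, Ideal.one_eq_top]; exact Submodule.mem_top
    | succ d ih =>
      rw [seq_succ, map_add]
      have : g - (H (seq d) + H (step d (g - H (seq d))))
          = (g - H (seq d)) - H (step d (g - H (seq d))) := by ring
      rw [this]
      exact step_spec d _ ih
  have hdiff : ∀ d d', d ≤ d' → seq d' - seq d ∈ (I k n)^d := by
    intro d d' hdd
    induction d' , hdd using Nat.le_induction with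
    | base => rw [sub_self]; exact Ideal.zero_mem _
    | succ d' hdd ih =>
      rw [seq_succ]
      have : seq d' + step d' (g - H (seq d')) - seq d
          = (seq d' - seq d) + step d' (g - H (seq d')) := by ring
      rw [this]
      exact Ideal.add_mem _ ih (pow_le_of_le (by omega) (step_mem d' _))
  let F : MvPowerSeries (Fin n) k := fun e => MvPowerSeries.coeff e (seq (e.degree + 1))
  have hFcoeff : ∀ e, MvPowerSeries.coeff e F = MvPowerSeries.coeff e (seq (e.degree + 1)) :=
    fun e => rfl
  have hFseq : ∀ d, F - seq d ∈ (I k n)^d := by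
    intro d
    apply mem_pow_of_coeff
    intro e he
    rw [map_sub, hFcoeff]
    rcases le_total (e.degree + 1) d with h | h
    · have hc := coeff_eq_zero_of_mem_pow (hdiff _ _ h) (e := e) (by omega)
      rw [map_sub] at hc
      rw [← sub_eq_zero.mp hc]
      ring
    · have hc := coeff_eq_zero_of_mem_pow (hdiff _ _ h) (e := e) (by omega)
      rw [map_sub] at hc
      rw [sub_eq_zero.mp hc]
      ring
  refine ⟨F, ?_⟩
  have hcoeffs : ∀ e, MvPowerSeries.coeff e (g - H F) = 0 := by
    intro e
    have h1 : g - H F = (g - H (seq (e.degree + 1))) + H (seq (e.degree + 1) - F) := by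
      rw [map_sub]; ring
    rw [h1, map_add]
    have h2 := coeff_eq_zero_of_mem_pow (hrem (e.degree + 1)) (e := e) (by omega)
    have h3 : H (seq (e.degree + 1) - F) ∈ (I k n)^(e.degree + 1) := by
      apply H_pow_mem H hHm
      have := Submodule.neg_mem _ (hFseq (e.degree + 1))
      rwa [neg_sub] at this
    have h4 := coeff_eq_zero_of_mem_pow h3 (e := e) (by omega)
    rw [h2, h4, add_zero]
  have : g - H F = 0 := by
    ext e
    rw [hcoeffs, map_zero]
  have := sub_eq_zero.mp this
  exact this.symm

end WithH
end IFTAux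

/-- (Inverse function theorem for formal power series.)  Let `k`
be a commutative ring and `H` a `k`-algebra endomorphism of `k[[x₁,…,xₙ]]`
mapping the augmentation ideal `m = (x₁,…,xₙ)` into itself and inducing a
bijection on `m/m²`.  Then `H` is an automorphism. -/
theorem inverse_function_theorem_power_series
    {k : Type*} [CommRing k] {n : ℕ}
    (H : MvPowerSeries (Fin n) k →ₐ[k] MvPowerSeries (Fin n) k)
    (m : Ideal (MvPowerSeries (Fin n) k))
    (hm : m = Ideal.span (Set.range (MvPowerSeries.X : Fin n → MvPowerSeries (Fin n) k)))
    (hHm : ∀ f ∈ m, H f ∈ m)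
    -- the induced map `m/m² → m/m²` is injective …
    (hinj : ∀ f ∈ m, H f ∈ m ^ 2 → f ∈ m ^ 2)
    -- … and surjective
    (hsurj : ∀ g ∈ m, ∃ f ∈ m, g - H f ∈ m ^ 2) :
    Function.Bijective H := by
  have hm' : m = IFTAux.I k n := hm
  subst hm'
  exact ⟨IFTAux.H_injective H hHm hinj hsurj, IFTAux.H_surjective H hHm hinj hsurj⟩
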